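/- Let G be a subgroup of S_p (p prime) acting freely and transitively on {1,...,p}, and let m = kp. Then Σ over classes [(g_1,...,g_m)] ∈ S(G,m) of φ_{(g_1,...,g_m)}(x_1,...,x_p) equals f_{p,m}(x_1,...,x_p) + (p-1)·x_1^k ⋯ x_p^k, where f_{p,m} is the sum of all degree-m monomials in p variables. -/

import Mathlib

def SGmRel (G : Type*) [Group G] (m : ℕ) (a b : Fin m → G) : Prop :=
  ∃ (σ : Equiv.Perm (Fin m)) (g : G), ∀ r, b r = a (σ r) * g

def SGm (G : Type*) [Group G] (m : ℕ) : Type _ :=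
  Quot (SGmRel G m)

section Aux

variable {p m : ℕ} {G : Subgroup (Equiv.Perm (Fin p))}

lemma sgmrel_equiv (H : Type*) [Group H] (m : ℕ) : Equivalence (SGmRel H m) := by
  constructor
  · exact fun a => ⟨1, 1, fun r => by simp⟩
  · rintro a b ⟨σ, g, h⟩
    exact ⟨σ⁻¹, g⁻¹, fun r => by rw [h (σ⁻¹ r)]; simp⟩
  · rintro a b c ⟨σ, g, h⟩ ⟨τ, g', h'⟩
    exact ⟨σ * τ, g * g', fun r => by rw [h' r, h (τ r)]; simp [mul_assoc]⟩

lemma sgm_mk_eq_iff {H : Type*} [Group H] {m : ℕ} {a b : Fin m → H} :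
    Quot.mk (SGmRel H m) a = Quot.mk (SGmRel H m) b ↔ SGmRel H m a b := by
  rw [Quot.eq]
  exact Equivalence.eqvGen_iff (sgmrel_equiv H m)

noncomputable def uu (hreg : ∀ i j : Fin p, ∃! g : G, (g : Equiv.Perm (Fin p)) i = j)
    (i j : Fin p) : G := (hreg i j).choose

variable (hreg : ∀ i j : Fin p, ∃! g : G, (g : Equiv.Perm (Fin p)) i = j)

lemma uu_spec (i j : Fin p) : ((uu hreg i j : G) : Equiv.Perm (Fin p)) i = j :=
  (hreg i j).choose_spec.1

lemma uu_eq {i j : Fin p} {x : G} (hx : (x : Equiv.Perm (Fin p)) i = j) : x = uu hreg i j :=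
  (hreg i j).choose_spec.2 x hx

lemma uu_bij (i : Fin p) : Function.Bijective (uu hreg i) := by
  constructor
  · intro j j' h
    rw [← uu_spec hreg i j, ← uu_spec hreg i j', h]
  · intro x
    exact ⟨(x : Equiv.Perm (Fin p)) i, (uu_eq hreg rfl).symm⟩

include hreg in
lemma cardG [Fintype G] (hpos : 0 < p) : Fintype.card G = p := by
  calc Fintype.card G = Fintype.card (Fin p) :=
        (Fintype.card_of_bijective (uu_bij hreg ⟨0, hpos⟩)).symm
    _ = p := Fintype.card_fin p


def cnt (g : Fin m → G) (x : G) : ℕ := (Finset.univ.filter (fun r => g r = x)).card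

noncomputable def acnt (g : Fin m → G) (i : Fin p) : Fin p → ℕ :=
  fun j => cnt g (uu hreg i j)

lemma cnt_comp (g : Fin m → G) (σ : Equiv.Perm (Fin m)) : cnt (g ∘ σ) = cnt g := by
  funext x
  simp only [cnt, Finset.card_filter, Function.comp]
  exact Equiv.sum_comp σ (fun r => if g r = x then 1 else 0)

lemma cnt_mul (g : Fin m → G) (h x : G) : cnt (fun r => g r * h) x = cnt g (x * h⁻¹) := by
  simp only [cnt]
  congr 1
  apply Finset.filter_congr
  intro r _
  constructor
  · intro hr; rw [← hr]; group
  · intro hr; rw [hr]; group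

lemma sum_cnt [Fintype G] (g : Fin m → G) : ∑ x : G, cnt g x = m := by
  have := Finset.card_eq_sum_card_fiberwise
    (f := g) (s := Finset.univ) (t := Finset.univ) (fun r _ => Finset.mem_univ _)
  simpa [cnt] using this.symm

lemma cnt_eq_exists_perm {g g' : Fin m → G} (h : cnt g = cnt g') :
    ∃ σ : Equiv.Perm (Fin m), g' = g ∘ σ := by
  classical
  have e : ∀ x : G, { r // g' r = x } ≃ { r // g r = x } := fun x =>
    Fintype.equivOfCardEq (by
      rw [Fintype.card_subtype, Fintype.card_subtype]
      exact (congrFun h x).symm)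
  refine ⟨Equiv.ofFiberEquiv e, funext fun r => ?_⟩
  exact (Equiv.ofFiberEquiv_map e r).symm

lemma exists_tuple [Fintype G] (n : G → ℕ) (hn : ∑ x : G, n x = m) :
    ∃ g : Fin m → G, cnt g = n := by
  classical
  let e : (Σ x : G, Fin (n x)) ≃ Fin m := Fintype.equivOfCardEq (by simp [hn])
  refine ⟨fun r => (e.symm r).1, funext fun x => ?_⟩
  simp only [cnt, Finset.card_filter]
  rw [Equiv.sum_comp e.symm (fun s : (Σ x : G, Fin (n x)) => if s.1 = x then 1 else 0)]
  rw [← Finset.univ_sigma_univ, Finset.sum_sigma]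
  simp [Finset.sum_ite_eq, apply_ite]


lemma acnt_comp (g : Fin m → G) (σ : Equiv.Perm (Fin m)) (i : Fin p) :
    acnt hreg (g ∘ σ) i = acnt hreg g i := by
  funext j; simp only [acnt, cnt_comp]

lemma uu_mul (i j : Fin p) (h : G) :
    uu hreg i j * h⁻¹ = uu hreg ((h : Equiv.Perm (Fin p)) i) j := by
  apply uu_eq
  simp [uu_spec hreg i j]

lemma acnt_mul (g : Fin m → G) (h : G) (i : Fin p) :
    acnt hreg (fun r => g r * h) i = acnt hreg g ((h : Equiv.Perm (Fin p)) i) := by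
  funext j
  simp only [acnt, cnt_mul, uu_mul hreg]

include hreg in
lemma sum_acnt [Fintype G] (g : Fin m → G) (i : Fin p) : ∑ j, acnt hreg g i j = m := by
  exact (Fintype.sum_equiv (Equiv.ofBijective _ (uu_bij hreg i)) _ (cnt g)
    (fun j => rfl)).trans (sum_cnt g)

include hreg in
lemma acnt_const_iff [Fintype G] {g : Fin m → G} {i : Fin p} {c : ℕ} :
    acnt hreg g i = (fun _ => c) ↔ cnt g = (fun _ => c) := by
  constructor
  · intro h
    funext x
    obtain ⟨j, hj⟩ := (uu_bij hreg i).2 x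
    rw [← hj]
    exact congrFun h j
  · intro h
    funext j
    exact congrFun h _

include hreg in
lemma const_of_invariant [Fintype G] (hp : p.Prime) (n : G → ℕ) {h : G} (hh : h ≠ 1)
    (hinv : ∀ x, n (x * h) = n x) : ∀ x y : G, n x = n y := by
  haveI : Fact p.Prime := ⟨hp⟩
  have hcard : Fintype.card G = p := cardG hreg hp.pos
  have ho : orderOf h = p := orderOf_eq_prime (by
    have := pow_card_eq_one (x := h)
    rwa [hcard] at this) hh
  have htop : Subgroup.zpowers h = ⊤ := by
    apply Subgroup.eq_top_of_card_eq
    rw [Nat.card_zpowers, ho, Nat.card_eq_fintype_card, hcard]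
  have key : ∀ (j : ℕ) (x : G), n (x * h ^ j) = n x := by
    intro j
    induction j with
    | zero => simp
    | succ j ih =>
      intro x
      rw [pow_succ, ← mul_assoc, hinv, ih]
  intro x y
  have : x⁻¹ * y ∈ Subgroup.zpowers h := by rw [htop]; trivial
  obtain ⟨j, hj⟩ := (mem_powers_iff_mem_zpowers.2 this)
  have hj' : h ^ j = x⁻¹ * y := hj
  have hy : y = x * h ^ j := by rw [hj']; group
  rw [hy, key]


lemma prod_X (R : Type*) [CommRing R] (g : Fin m → G) (i : Fin p) :
    (∏ r : Fin m, MvPolynomial.X ((g r : Equiv.Perm (Fin p)) i) : MvPolynomial (Fin p) R) =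
      ∏ j : Fin p, MvPolynomial.X j ^ acnt hreg g i j := by
  classical
  rw [← Finset.prod_fiberwise Finset.univ (fun r => ((g r : Equiv.Perm (Fin p)) i))
    (fun r => (MvPolynomial.X ((g r : Equiv.Perm (Fin p)) i) : MvPolynomial (Fin p) R))]
  apply Finset.prod_congr rfl
  intro j _
  rw [Finset.prod_congr rfl (fun r hr => by
    rw [(Finset.mem_filter.mp hr).2] :
      ∀ r ∈ Finset.univ.filter (fun r => ((g r : Equiv.Perm (Fin p)) i) = j), _ = _),
    Finset.prod_const]
  congr 1
  simp only [acnt, cnt]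
  congr 1
  apply Finset.filter_congr
  intro r _
  constructor
  · intro hr; exact uu_eq hreg hr
  · intro hr; rw [hr]; exact uu_spec hreg i j

/-- Core rigidity lemma. -/
lemma core_rel {g g' : Fin m → G} {i i' : Fin p}
    (h : acnt hreg g i = acnt hreg g' i') :
    ∃ (σ : Equiv.Perm (Fin m)) (hh : G), (∀ r, g' r = g (σ r) * hh) ∧
      ((hh : Equiv.Perm (Fin p)) i' = i) := by
  classical
  set hh := uu hreg i' i with hdef
  have hhi : ((hh : G) : Equiv.Perm (Fin p)) i' = i := uu_spec hreg i' i
  have h2 : acnt hreg (fun r => g' r * hh⁻¹) i = acnt hreg g' i' := by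
    rw [acnt_mul hreg g' hh⁻¹ i]
    have : ((hh⁻¹ : G) : Equiv.Perm (Fin p)) i = i' := by
      rw [← hhi]; simp
    rw [this]
  have h3 : cnt g = cnt (fun r => g' r * hh⁻¹) := by
    funext x
    obtain ⟨j, hj⟩ := (uu_bij hreg i).2 x
    rw [← hj]
    exact (congrFun h j).trans (congrFun h2.symm j)
  obtain ⟨σ, hσ⟩ := cnt_eq_exists_perm h3
  refine ⟨σ, hh, fun r => ?_, hhi⟩
  have := congrFun hσ r
  simp only [Function.comp] at this
  rw [← this]
  group

end Aux

theorem stmt6 (p k : ℕ) (hp : p.Prime) (hk : 1 ≤ k)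
    (G : Subgroup (Equiv.Perm (Fin p)))
    (hreg : ∀ i j : Fin p, ∃! g : G, (g : Equiv.Perm (Fin p)) i = j)
    (R : Type*) [CommRing R]
    (Φ : SGm (↥G) (k * p) → MvPolynomial (Fin p) R)
    (hΦ : ∀ g : Fin (k * p) → ↥G,
      Φ (Quot.mk (SGmRel (↥G) (k * p)) g) =
        ∑ i : Fin p, ∏ r : Fin (k * p), MvPolynomial.X ((g r : Equiv.Perm (Fin p)) i)) :
    ∑ᶠ c : SGm (↥G) (k * p), Φ c =
      (∑ a ∈ (Fintype.piFinset fun _ : Fin p => Finset.range (k * p + 1)).filter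
          (fun a => ∑ i, a i = k * p),
        ∏ i : Fin p, (MvPolynomial.X i : MvPolynomial (Fin p) R) ^ a i) +
      (p - 1) • ∏ i : Fin p, (MvPolynomial.X i : MvPolynomial (Fin p) R) ^ k := by
  classical
  haveI : Finite (SGm (↥G) (k * p)) := Finite.of_surjective _ Quot.mk_surjective
  haveI := Fintype.ofFinite (SGm (↥G) (k * p))
  haveI := Fintype.ofFinite ↥G
  have hpos : 0 < p := hp.pos
  have hcard : Fintype.card ↥G = p := cardG hreg hpos
  set A := (Fintype.piFinset fun _ : Fin p => Finset.range ((k * p) + 1)).filter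
      (fun a => ∑ i, a i = (k * p)) with hA
  set kk : Fin p → ℕ := fun _ => k with hkk
  set F : SGm (↥G) (k * p) × Fin p → (Fin p → ℕ) :=
    fun ci => acnt hreg (Quot.out ci.1) ci.2 with hF
  -- membership of acnt in A
  have hmem : ∀ (g : Fin (k * p) → ↥G) (i : Fin p), acnt hreg g i ∈ A := by
    intro g i
    rw [hA, Finset.mem_filter, Fintype.mem_piFinset]
    refine ⟨fun j => Finset.mem_range.mpr (Nat.lt_succ_of_le ?_), sum_acnt hreg g i⟩
    exact (Finset.single_le_sum (f := acnt hreg g i) (fun _ _ => Nat.zero_le _)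
      (Finset.mem_univ j)).trans_eq (sum_acnt hreg g i)
  -- relation between a tuple and the out of its class
  have out_rel : ∀ g : Fin (k * p) → ↥G,
      SGmRel (↥G) (k * p) (Quot.out (Quot.mk (SGmRel (↥G) (k * p)) g)) g := by
    intro g
    exact sgm_mk_eq_iff.mp (Quot.out_eq _)
  have eq_of_rel : ∀ c c' : SGm (↥G) (k * p), SGmRel (↥G) (k * p) (Quot.out c) (Quot.out c') → c = c' := by
    intro c c' h
    rw [← Quot.out_eq c, ← Quot.out_eq c']
    exact Quot.sound h
  -- cnt of out under relation
  have cnt_rel : ∀ (g : Fin (k * p) → ↥G) (g' : Fin (k * p) → ↥G) (σ : Equiv.Perm (Fin (k * p))) (hh : ↥G),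
      (∀ r, g' r = g (σ r) * hh) → ∀ x, cnt g' x = cnt g (x * hh⁻¹) := by
    intro g g' σ hh hrel x
    have h1 : g' = fun r => (g ∘ σ) r * hh := funext hrel
    rw [h1, cnt_mul (g ∘ σ) hh x, cnt_comp g σ]
  -- surjectivity of F onto A
  have hsurj : ∀ a ∈ A, ∃ ci : SGm (↥G) (k * p) × Fin p, F ci = a := by
    intro a ha
    rw [hA, Finset.mem_filter] at ha
    set i0 : Fin p := ⟨0, hpos⟩ with hi0
    set n : ↥G → ℕ := fun x => a ((x : Equiv.Perm (Fin p)) i0) with hn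
    have hsum : ∑ x : ↥G, n x = (k * p) := by
      rw [← Fintype.sum_equiv (Equiv.ofBijective _ (uu_bij hreg i0))
        (fun j => n (uu hreg i0 j)) n (fun j => rfl)]
      simpa [hn, uu_spec hreg] using ha.2
    obtain ⟨g, hg⟩ := exists_tuple n hsum
    have hga : acnt hreg g i0 = a := by
      funext j
      show cnt g (uu hreg i0 j) = a j
      rw [congrFun hg _, hn]
      simp [uu_spec hreg]
    obtain ⟨σ, hh, hrel⟩ := out_rel g
    refine ⟨⟨Quot.mk (SGmRel (↥G) (k * p)) g, (hh : Equiv.Perm (Fin p)) i0⟩, ?_⟩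
    show acnt hreg (Quot.out (Quot.mk (SGmRel (↥G) (k * p)) g)) ((hh : Equiv.Perm (Fin p)) i0) = a
    rw [← hga]
    have h1 : g = fun r => ((Quot.out (Quot.mk (SGmRel (↥G) (k * p)) g)) ∘ σ) r * hh := funext hrel
    conv_rhs => rw [h1]
    rw [acnt_mul hreg _ hh i0, acnt_comp hreg _ σ]
  -- the constant class c0
  obtain ⟨g0, hg0⟩ := exists_tuple (fun _ : ↥G => k)
    (by rw [Finset.sum_const, Finset.card_univ, hcard, smul_eq_mul, mul_comm])
  set c0 : SGm (↥G) (k * p) := Quot.mk (SGmRel (↥G) (k * p)) g0 with hc0def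
  have hc0 : cnt (Quot.out c0) = fun _ => k := by
    obtain ⟨σ, hh, hrel⟩ := out_rel g0
    funext x
    have h1 : cnt g0 (x * hh) = cnt (Quot.out c0) ((x * hh) * hh⁻¹) := cnt_rel _ _ σ hh hrel _
    rw [congrFun hg0 (x * hh)] at h1
    rw [mul_inv_cancel_right] at h1
    exact h1.symm
  have hconst_uniq : ∀ c : SGm (↥G) (k * p), cnt (Quot.out c) = (fun _ => k) → c = c0 := by
    intro c hc
    obtain ⟨σ, hσ⟩ := cnt_eq_exists_perm (hc.trans hc0.symm)
    exact eq_of_rel c c0 ⟨σ, 1, fun r => by rw [congrFun hσ r]; simp [Function.comp]⟩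
  -- uniqueness of fibers over non-constant vectors
  have huniq : ∀ a, a ≠ kk → ∀ ci ci' : SGm (↥G) (k * p) × Fin p, F ci = a → F ci' = a → ci = ci' := by
    intro a hak ci ci' hci hci'
    obtain ⟨c, i⟩ := ci
    obtain ⟨c', i'⟩ := ci'
    simp only [hF] at hci hci'
    have h0 : acnt hreg (Quot.out c) i = acnt hreg (Quot.out c') i' := hci.trans hci'.symm
    obtain ⟨σ, hh, hrel, hhi⟩ := core_rel hreg h0
    have hcc : c = c' := eq_of_rel c c' ⟨σ, hh, hrel⟩
    subst hcc
    -- now acnt (out c) i = acnt (out c) i'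
    obtain ⟨σ2, hh2, hrel2, hhi2⟩ := core_rel hreg h0
    by_cases h2 : hh2 = 1
    · subst h2
      simp only [OneMemClass.coe_one, Equiv.Perm.coe_one, id_eq] at hhi2
      rw [Prod.mk.injEq]
      exact ⟨rfl, hhi2.symm⟩
    · exfalso
      -- cnt (out c) invariant under right mult by hh2⁻¹
      have hinv : ∀ x, cnt (Quot.out c) (x * hh2⁻¹) = cnt (Quot.out c) x :=
        fun x => (cnt_rel _ _ σ2 hh2 hrel2 x).symm
      have hconst : ∀ x y : ↥G, cnt (Quot.out c) x = cnt (Quot.out c) y :=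
        const_of_invariant hreg hp _ (inv_ne_one.mpr h2) hinv
      have hval : cnt (Quot.out c) = fun _ => k := by
        have hsum2 : ∑ x : ↥G, cnt (Quot.out c) x = (k * p) := sum_cnt _
        have hsum3 : ∑ x : ↥G, cnt (Quot.out c) x = p * cnt (Quot.out c) 1 := by
          rw [Finset.sum_congr rfl (fun x _ => hconst x 1), Finset.sum_const,
            Finset.card_univ, hcard, smul_eq_mul]
        have : p * cnt (Quot.out c) 1 = k * p := by rw [← hsum3, hsum2]
        have hval1 : cnt (Quot.out c) 1 = k := by
          apply Nat.eq_of_mul_eq_mul_left hpos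
          rw [this, mul_comm]
        funext x
        rw [hconst x 1, hval1]
      apply hak
      rw [← hci, hkk]
      exact (acnt_const_iff hreg).mpr hval
  -- kk ∈ A
  have hkkA : kk ∈ A := by
    rw [hA, Finset.mem_filter, Fintype.mem_piFinset]
    constructor
    · intro j
      rw [Finset.mem_range]
      exact Nat.lt_succ_of_le (Nat.le_mul_of_pos_right k hpos)
    · simp [hkk, Finset.sum_const, mul_comm]
  -- fiber over kk
  have hfiber_kk : (Finset.univ ×ˢ Finset.univ).filter (fun ci => F ci = kk)
      = {c0} ×ˢ (Finset.univ : Finset (Fin p)) := by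
    ext ci
    simp only [Finset.mem_filter, Finset.mem_product, Finset.mem_univ, true_and,
      Finset.mem_singleton, and_true]
    constructor
    · intro h
      exact hconst_uniq ci.1 ((acnt_const_iff hreg).mp h)
    · intro h
      show acnt hreg (Quot.out ci.1) ci.2 = kk
      rw [h, hkk]
      exact (acnt_const_iff hreg).mpr hc0
  -- fiber cardinalities
  have hcards : ∀ a ∈ A, ((Finset.univ ×ˢ Finset.univ).filter (fun ci => F ci = a)).card
      = if a = kk then p else 1 := by
    intro a ha
    by_cases hak : a = kk
    · subst hak
      rw [hfiber_kk, if_pos rfl, Finset.card_product]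
      simp
    · rw [if_neg hak, Finset.card_eq_one]
      obtain ⟨ci, hci⟩ := hsurj a ha
      refine ⟨ci, ?_⟩
      ext ci'
      simp only [Finset.mem_filter, Finset.mem_product, Finset.mem_univ, true_and,
        Finset.mem_singleton, and_true]
      constructor
      · intro h
        exact huniq a hak ci' ci h hci
      · intro h
        rw [h]
        exact hci
  -- assemble
  rw [finsum_eq_sum_of_fintype]
  have lhs1 : ∑ c : SGm (↥G) (k * p), Φ c = ∑ ci ∈ Finset.univ ×ˢ Finset.univ,
      ∏ j : Fin p, (MvPolynomial.X j : MvPolynomial (Fin p) R) ^ F ci j := by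
    rw [Finset.sum_product]
    apply Finset.sum_congr rfl
    intro c _
    conv_lhs => rw [← Quot.out_eq c]
    rw [hΦ]
    exact Finset.sum_congr rfl fun i _ => prod_X hreg R _ i
  rw [lhs1, ← Finset.sum_fiberwise_of_maps_to (t := A)
    (fun ci _ => hmem (Quot.out ci.1) ci.2)
    (fun ci => ∏ j : Fin p, (MvPolynomial.X j : MvPolynomial (Fin p) R) ^ F ci j)]
  have inner : ∀ a ∈ A, (∑ ci ∈ (Finset.univ ×ˢ Finset.univ).filter (fun ci => F ci = a),
      ∏ j : Fin p, (MvPolynomial.X j : MvPolynomial (Fin p) R) ^ F ci j)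
      = (if a = kk then p else 1) • ∏ j : Fin p, (MvPolynomial.X j : MvPolynomial (Fin p) R) ^ a j := by
    intro a ha
    rw [Finset.sum_congr rfl (fun ci hci => by
      rw [(Finset.mem_filter.mp hci).2]), Finset.sum_const, hcards a ha]
  rw [Finset.sum_congr rfl inner]
  have split : ∀ a ∈ A, (if a = kk then p else 1) •
      (∏ j : Fin p, (MvPolynomial.X j : MvPolynomial (Fin p) R) ^ a j)
      = (∏ j : Fin p, (MvPolynomial.X j : MvPolynomial (Fin p) R) ^ a j)
        + (if a = kk then (p - 1) • ∏ j : Fin p, (MvPolynomial.X j : MvPolynomial (Fin p) R) ^ a j else 0) := by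
    intro a _
    by_cases h : a = kk
    · rw [if_pos h, if_pos h]
      have h1 : (1 : ℕ) + (p - 1) = p := Nat.add_sub_cancel' hp.one_lt.le
      calc p • (∏ j : Fin p, (MvPolynomial.X j : MvPolynomial (Fin p) R) ^ a j)
          = ((1 : ℕ) + (p - 1)) • (∏ j : Fin p, (MvPolynomial.X j : MvPolynomial (Fin p) R) ^ a j) := by
            rw [h1]
        _ = _ := by rw [add_smul, one_smul]
    · rw [if_neg h, if_neg h, one_smul, add_zero]
  rw [Finset.sum_congr rfl split, Finset.sum_add_distrib,
    Finset.sum_ite_eq' A kk, if_pos hkkA]
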